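/- For every n ≥ 1 and p ≥ 1 there exists a choice of real weights w_{1j} ≠ 0, w_{2kj} and biases b_{1j}, b_{2k} (j = 1, …, n, k = 1, …, p) such that the single-hidden-layer ℝ → ℝ^p ReLU neural network y_k(x) = Σ_{j=1}^{n} w_{2kj} σ(w_{1j} x + b_{1j}) + b_{2k} has exactly n knots; hence the upper bound of n knots for single-hidden-layer networks with n neurons is tight. -/

import Mathlib

/-- The rectified linear unit `σ(x) = max(0, x)`. -/
noncomputable def relu (x : ℝ) : ℝ := max 0 x

lemma relu_diff_of_ne {x : ℝ} (hx : x ≠ 0) : DifferentiableAt ℝ relu x := by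
  rcases lt_or_gt_of_ne hx with h | h
  · have : relu =ᶠ[nhds x] (fun _ => (0 : ℝ)) := by
      filter_upwards [Iio_mem_nhds h] with y hy
      simp [relu, le_of_lt hy.out]
    exact (differentiableAt_const 0).congr_of_eventuallyEq this
  · have : relu =ᶠ[nhds x] (fun y => y) := by
      filter_upwards [Ioi_mem_nhds h] with y hy
      simp [relu, le_of_lt hy.out]
    exact differentiableAt_fun_id.congr_of_eventuallyEq this

lemma not_relu_diff_zero : ¬ DifferentiableAt ℝ relu 0 := by
  intro h
  have habs : (fun y : ℝ => |y|) = fun y => 2 * relu y - y := by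
    funext y
    rcases le_or_gt 0 y with hy | hy
    · simp [relu, hy, abs_of_nonneg hy]; ring
    · simp [relu, le_of_lt hy, abs_of_neg hy]
  have : DifferentiableAt ℝ (fun y : ℝ => |y|) 0 := by
    rw [habs]
    exact (h.const_mul 2).sub differentiableAt_fun_id
  exact not_differentiableAt_abs_zero this

theorem single_layer_knot_bound_tight (n p : ℕ) (hn : 1 ≤ n) (hp : 1 ≤ p) :
    ∃ (w1 b1 : Fin n → ℝ) (w2 : Fin p → Fin n → ℝ) (b2 : Fin p → ℝ),
      (∀ j, w1 j ≠ 0) ∧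
      {x : ℝ | ¬ DifferentiableAt ℝ
        (fun x : ℝ => fun k : Fin p => (∑ j, w2 k j * relu (w1 j * x + b1 j)) + b2 k)
        x}.Finite ∧
      {x : ℝ | ¬ DifferentiableAt ℝ
        (fun x : ℝ => fun k : Fin p => (∑ j, w2 k j * relu (w1 j * x + b1 j)) + b2 k)
        x}.ncard = n := by
  refine ⟨fun _ => 1, fun j => -(j : ℝ), fun _ _ => 1, fun _ => 0, fun j => one_ne_zero, ?_⟩
  have hpne : Nonempty (Fin p) := Fin.pos_iff_nonempty.mp hp
  set g : ℝ → ℝ := fun x => ∑ j : Fin n, relu (x - j) with hg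
  -- the network equals `fun x k => g x` up to simp
  have hFg : (fun x : ℝ => fun k : Fin p =>
      (∑ j : Fin n, (1:ℝ) * relu (1 * x + -(j:ℝ))) + 0) = fun x _ => g x := by
    funext x k
    simp [hg, sub_eq_add_neg]
  have hinj : Function.Injective (fun j : Fin n => (j : ℝ)) := by
    intro a b h
    exact Fin.ext (Nat.cast_injective h)
  -- each term differentiable away from its knot
  have hterm : ∀ (j : Fin n) (x : ℝ), x ≠ (j : ℝ) →
      DifferentiableAt ℝ (fun y => relu (y - (j : ℝ))) x := by
    intro j x hx
    exact (relu_diff_of_ne (sub_ne_zero.mpr hx)).comp x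
      (differentiableAt_fun_id.sub_const _)
  have hkey : {x : ℝ | ¬ DifferentiableAt ℝ g x} = Set.range (fun j : Fin n => (j : ℝ)) := by
    ext x
    simp only [Set.mem_setOf_eq, Set.mem_range]
    constructor
    · intro hx
      by_contra hno
      push_neg at hno
      exact hx (DifferentiableAt.fun_sum fun j _ => hterm j x fun h => hno j h.symm)
    · rintro ⟨m, rfl⟩ hdiff
      -- split the sum
      have hsplit : g = fun x => relu (x - (m : ℝ)) +
          ∑ j ∈ Finset.univ.erase m, relu (x - (j : ℝ)) := by
        funext x
        exact (Finset.add_sum_erase _ _ (Finset.mem_univ m)).symm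
      have hrest : DifferentiableAt ℝ
          (fun x => ∑ j ∈ Finset.univ.erase m, relu (x - (j : ℝ))) (m : ℝ) := by
        refine DifferentiableAt.fun_sum fun j hj => hterm j _ ?_
        exact fun h => (Finset.mem_erase.mp hj).1 (hinj h).symm
      have hm : DifferentiableAt ℝ (fun x => relu (x - (m : ℝ))) (m : ℝ) := by
        have := hdiff.sub hrest
        rw [hsplit] at this
        refine this.congr_of_eventuallyEq (Filter.Eventually.of_forall fun x => ?_)
        simp only [Pi.sub_apply]
        ring
      have : DifferentiableAt ℝ relu 0 := by
        have hm' : DifferentiableAt ℝ (fun x => relu (x - (m:ℝ))) (0 + (m:ℝ)) := by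
          simpa using hm
        have h2 := hm'.comp 0 (differentiableAt_fun_id.add_const (m : ℝ))
        have heq : ((fun x => relu (x - (m:ℝ))) ∘ fun y => y + (m:ℝ)) = relu := by
          funext y; simp
        rwa [heq] at h2
      exact not_relu_diff_zero this
  have hset : {x : ℝ | ¬ DifferentiableAt ℝ
      (fun x : ℝ => fun k : Fin p =>
        (∑ j : Fin n, (1:ℝ) * relu (1 * x + -(j:ℝ))) + 0) x}
      = Set.range (fun j : Fin n => (j : ℝ)) := by
    rw [hFg, ← hkey]
    ext x
    simp only [Set.mem_setOf_eq]
    rw [differentiableAt_pi]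
    constructor
    · intro h hg'
      exact h fun _ => hg'
    · intro h hall
      exact h (hall hpne.some)
  constructor
  · rw [hset]; exact Set.finite_range _
  · rw [hset, ← Set.image_univ, Set.ncard_image_of_injective _ hinj,
      Set.ncard_univ, Nat.card_eq_fintype_card, Fintype.card_fin]
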